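/- The alternating series ∑_{n=1}^∞ (−1)^{n−1} (1/n − ln((n+1)/n)) converges to ln(4/π). -/

import Mathlib

open Filter Finset Real Topology

private noncomputable def gEuler (n : ℕ) : ℝ :=
  1 / (n + 1 : ℝ) - Real.log ((n + 2) / (n + 1))

private lemma gEuler_nonneg (n : ℕ) : 0 ≤ gEuler n := by
  have h1 : (0:ℝ) < (n:ℝ) + 1 := by positivity
  have h2 : (0:ℝ) < (n:ℝ) + 2 := by positivity
  have h := Real.log_le_sub_one_of_pos (show (0:ℝ) < ((n:ℝ)+2)/((n:ℝ)+1) by positivity)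
  have heq : ((n:ℝ)+2)/((n:ℝ)+1) - 1 = 1/((n:ℝ)+1) := by field_simp; norm_num
  rw [heq] at h
  simpa [gEuler] using h

private lemma gEuler_le (n : ℕ) : gEuler n ≤ 1 / ((n:ℝ)+1)^2 := by
  have h1 : (0:ℝ) < (n:ℝ) + 1 := by positivity
  have h2 : (0:ℝ) < (n:ℝ) + 2 := by positivity
  have h := Real.one_sub_inv_le_log_of_pos (show (0:ℝ) < ((n:ℝ)+2)/((n:ℝ)+1) by positivity)
  have heq : 1 - (((n:ℝ)+2)/((n:ℝ)+1))⁻¹ = 1/((n:ℝ)+2) := by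
    rw [inv_div]
    field_simp
    norm_num
  rw [heq] at h
  have hle : 1/((n:ℝ)+1) - 1/((n:ℝ)+2) ≤ 1/((n:ℝ)+1)^2 := by
    rw [div_sub_div _ _ h1.ne' h2.ne']
    rw [div_le_div_iff₀ (by positivity) (by positivity)]
    ring_nf
    nlinarith [sq_nonneg ((n:ℝ)+1)]
  unfold gEuler
  linarith

private lemma gEuler_summable : Summable gEuler := by
  have hb : Summable (fun n : ℕ => 1 / ((n:ℝ)+1)^2) := by
    have := (summable_nat_add_iff 1).mpr
      (Real.summable_one_div_nat_pow.mpr (le_refl 2))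
    refine this.congr fun n => ?_
    push_cast
    ring
  exact Summable.of_nonneg_of_le gEuler_nonneg gEuler_le hb

private lemma sum_log_telescope (m : ℕ) :
    ∑ n ∈ range m, Real.log (((n:ℝ)+2)/((n:ℝ)+1)) = Real.log ((m:ℝ)+1) := by
  induction m with
  | zero => simp
  | succ m ih =>
    rw [Finset.sum_range_succ, ih,
      Real.log_div (by positivity) (by positivity)]
    push_cast
    ring

private lemma harmonic_eq (m : ℕ) :
    ∑ n ∈ range m, (1 / ((n:ℝ)+1)) = ∑ n ∈ range m, gEuler n + Real.log ((m:ℝ)+1) := by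
  have : ∑ n ∈ range m, gEuler n
      = ∑ n ∈ range m, (1/((n:ℝ)+1)) - ∑ n ∈ range m, Real.log (((n:ℝ)+2)/((n:ℝ)+1)) := by
    rw [← Finset.sum_sub_distrib]; rfl
  rw [this, sum_log_telescope]
  ring

private lemma alt_harmonic_eq (k : ℕ) :
    ∑ n ∈ range (2*k), ((-1:ℝ)^n / ((n:ℝ)+1))
      = ∑ n ∈ range (2*k), (1/((n:ℝ)+1)) - ∑ n ∈ range k, (1/((n:ℝ)+1)) := by
  induction k with
  | zero => simp
  | succ k ih =>
    have h2 : 2*(k+1) = (2*k+1)+1 := by ring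
    rw [h2, Finset.sum_range_succ, Finset.sum_range_succ, Finset.sum_range_succ,
      Finset.sum_range_succ, Finset.sum_range_succ (fun n => 1/((n:ℝ)+1)) k, ih]
    have he : (-1:ℝ)^(2*k) = 1 := by
      rw [pow_mul]; norm_num
    have ho : (-1:ℝ)^(2*k+1) = -1 := by
      rw [pow_succ, he]; norm_num
    rw [he, ho]
    push_cast
    have hk1 : ((k:ℝ)+1) ≠ 0 := by positivity
    have hk2 : (2*(k:ℝ)+1) ≠ 0 := by positivity
    have hk3 : (2*(k:ℝ)+1+1) ≠ 0 := by positivity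
    field_simp
    ring

private lemma alt_log_eq (k : ℕ) :
    ∑ n ∈ range (2*k), ((-1:ℝ)^n * Real.log (((n:ℝ)+2)/((n:ℝ)+1)))
      = Real.log (∏ i ∈ range k, ((2:ℝ) * i + 2) / (2 * i + 1) * ((2 * i + 2) / (2 * i + 3))) := by
  induction k with
  | zero => simp
  | succ k ih =>
    have h2 : 2*(k+1) = (2*k+1)+1 := by ring
    have hprodpos : (0:ℝ) < ∏ i ∈ range k, ((2:ℝ) * i + 2) / (2 * i + 1) * ((2 * i + 2) / (2 * i + 3)) := by
      apply Finset.prod_pos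
      intro i _
      positivity
    set x := (k:ℝ) with hxdef
    have hx0 : (0:ℝ) ≤ x := Nat.cast_nonneg k
    rw [h2, Finset.sum_range_succ, Finset.sum_range_succ, ih, Finset.prod_range_succ]
    have he : (-1:ℝ)^(2*k) = 1 := by rw [pow_mul]; norm_num
    have ho : (-1:ℝ)^(2*k+1) = -1 := by rw [pow_succ, he]; norm_num
    have hc1 : ((2*k : ℕ):ℝ) = 2*x := by push_cast; ring
    have hc2 : ((2*k+1 : ℕ):ℝ) = 2*x+1 := by push_cast; ring
    rw [he, ho, hc1, hc2]
    have ea : (2*x+1+2 : ℝ) = 2*x+3 := by ring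
    have eb : (2*x+1+1 : ℝ) = 2*x+2 := by ring
    rw [ea, eb, Real.log_mul hprodpos.ne' (by positivity)]
    have hlog : Real.log ((2*x+2)/(2*x+1) * ((2*x+2)/(2*x+3)))
        = Real.log ((2*x+2)/(2*x+1)) - Real.log ((2*x+3)/(2*x+2)) := by
      rw [Real.log_mul (by positivity) (by positivity),
        Real.log_div (by positivity) (by positivity),
        Real.log_div (by positivity) (by positivity),
        Real.log_div (by positivity) (by positivity)]
      ring
    rw [hlog]
    ring

theorem alternating_euler_series_eq_log_four_div_pi :
    HasSum (fun n : ℕ => (-1 : ℝ) ^ n * (1 / (n + 1 : ℝ) - Real.log ((n + 2) / (n + 1))))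
      (Real.log (4 / Real.pi)) := by
  set f : ℕ → ℝ := fun n => (-1 : ℝ) ^ n * (1 / (n + 1 : ℝ) - Real.log ((n + 2) / (n + 1)))
    with hf
  have habs : ∀ n, |f n| = gEuler n := by
    intro n
    rw [hf]
    simp only [abs_mul, abs_pow, abs_neg, abs_one, one_pow, one_mul]
    exact abs_of_nonneg (gEuler_nonneg n)
  have hsummable : Summable f := by
    rw [← summable_abs_iff]
    exact gEuler_summable.congr fun n => (habs n).symm
  have hS := hsummable.hasSum
  -- even partial sums tend to the sum
  have h2k : Tendsto (fun k : ℕ => 2*k) atTop atTop :=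
    tendsto_atTop_mono (fun k => by simp only [id_eq]; omega) tendsto_id
  have heven : Tendsto (fun k => ∑ n ∈ range (2*k), f n) atTop (𝓝 (∑' n, f n)) :=
    hS.tendsto_sum_nat.comp h2k
  -- decompose the even partial sums
  have hdecomp : ∀ k : ℕ, ∑ n ∈ range (2*k), f n
      = ((∑ n ∈ range (2*k), gEuler n) - ∑ n ∈ range k, gEuler n)
        + Real.log (((2*(k:ℝ))+1)/((k:ℝ)+1))
        - Real.log (∏ i ∈ range k, ((2:ℝ) * i + 2) / (2 * i + 1) * ((2 * i + 2) / (2 * i + 3))) := by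
    intro k
    have hsplit : ∑ n ∈ range (2*k), f n
        = ∑ n ∈ range (2*k), ((-1:ℝ)^n / ((n:ℝ)+1))
          - ∑ n ∈ range (2*k), ((-1:ℝ)^n * Real.log (((n:ℝ)+2)/((n:ℝ)+1))) := by
      rw [← Finset.sum_sub_distrib]
      refine Finset.sum_congr rfl fun n _ => ?_
      rw [hf]
      ring
    rw [hsplit, alt_harmonic_eq, alt_log_eq, harmonic_eq (2*k), harmonic_eq k,
      Real.log_div (by positivity) (by positivity)]
    have hc : ((2*k : ℕ) : ℝ) = 2*(k:ℝ) := by push_cast; ring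
    rw [hc]
    ring
  -- limit of each piece
  have hG : Tendsto (fun m => ∑ n ∈ range m, gEuler n) atTop (𝓝 (∑' n, gEuler n)) :=
    gEuler_summable.hasSum.tendsto_sum_nat
  have hGdiff : Tendsto (fun k : ℕ =>
      (∑ n ∈ range (2*k), gEuler n) - ∑ n ∈ range k, gEuler n) atTop (𝓝 0) := by
    have := (hG.comp h2k).sub hG
    simpa using this
  have hlog2 : Tendsto (fun k : ℕ => Real.log (((2*(k:ℝ))+1)/((k:ℝ)+1))) atTop
      (𝓝 (Real.log 2)) := by
    have hratio : Tendsto (fun k : ℕ => ((2*(k:ℝ))+1)/((k:ℝ)+1)) atTop (𝓝 2) := by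
      have h1 : Tendsto (fun k : ℕ => 2 - 1/((k:ℝ)+1)) atTop (𝓝 2) := by
        have : Tendsto (fun n : ℕ => 1 / ((n : ℝ) + 1)) atTop (𝓝 0) :=
          tendsto_one_div_add_atTop_nhds_zero_nat
        have h2 := tendsto_const_nhds (x := (2:ℝ)) (f := atTop (α := ℕ))
        simpa using h2.sub this
      refine h1.congr fun k => ?_
      have : ((k:ℝ)+1) ≠ 0 := by positivity
      field_simp
      ring
    exact ((Real.continuousAt_log two_ne_zero).tendsto.comp hratio)
  have hlogW : Tendsto (fun k : ℕ =>
      Real.log (∏ i ∈ range k, ((2:ℝ) * i + 2) / (2 * i + 1) * ((2 * i + 2) / (2 * i + 3))))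
      atTop (𝓝 (Real.log (Real.pi/2))) := by
    have hpi : (Real.pi/2 : ℝ) ≠ 0 := by positivity
    exact (Real.continuousAt_log hpi).tendsto.comp Real.tendsto_prod_pi_div_two
  have hcomb : Tendsto (fun k => ∑ n ∈ range (2*k), f n) atTop
      (𝓝 (0 + Real.log 2 - Real.log (Real.pi/2))) := by
    have := (hGdiff.add hlog2).sub hlogW
    refine this.congr fun k => (hdecomp k).symm
  have hsum_eq : ∑' n, f n = 0 + Real.log 2 - Real.log (Real.pi/2) :=
    tendsto_nhds_unique heven hcomb
  have hfinal : Real.log (4 / Real.pi) = 0 + Real.log 2 - Real.log (Real.pi/2) := by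
    rw [Real.log_div (by norm_num) Real.pi_ne_zero,
      Real.log_div Real.pi_ne_zero (by norm_num)]
    have h4 : Real.log 4 = Real.log 2 + Real.log 2 := by
      rw [← Real.log_mul (by norm_num) (by norm_num)]; norm_num
    rw [h4]; ring
  rw [hfinal, ← hsum_eq]
  exact hS
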